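/- Suppose φ̄ : (Fin n → ℝ) → ℝ is continuously differentiable with φ̄(0) = 0 and satisfies the steady-state HJB equation with state cost m (continuous), i.e. for all x: ∇φ̄(x) ⬝ᵥ f(x) − (1/4)·((g x)ᵀ.mulVec (∇φ̄ x)) ⬝ᵥ (R⁻¹.mulVec ((g x)ᵀ.mulVec (∇φ̄ x))) + m(x) = 0. Let g be continuous and let x : ℝ → (Fin n → ℝ) be continuously differentiable and solve the optimal closed loop x'(t) = f(x(t)) − (1/2)·(g (x t)).mulVec (R⁻¹.mulVec ((g (x t))ᵀ.mulVec (∇φ̄ (x t)))) for all t, with the feedback control u(t) := −(1/2)·R⁻¹.mulVec ((g (x t))ᵀ.mulVec (∇φ̄ (x t))). If x(T) → 0 as T → ∞, then for every T ≥ 0, ∫₀ᵀ (‖u(t)‖²_R + m(x(t))) dt = φ̄(x(0)) − φ̄(x(T)), and consequently ∫₀ᵀ (‖u(t)‖²_R + m(x(t))) dt → φ̄(x(0)) as T → ∞. -/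

import Mathlib

open Matrix Filter

/-- Euclidean gradient of a scalar function on `Fin n → ℝ`:
the vector of partial derivatives. -/
noncomputable def grad {n : ℕ} (φ : (Fin n → ℝ) → ℝ) (x : Fin n → ℝ) : Fin n → ℝ :=
  fun i => fderiv ℝ φ x (Pi.single i 1)

/-- `R`-weighted squared norm `‖u‖²_R = u ⬝ᵥ R.mulVec u`. -/
def sqR {p : ℕ} (R : Matrix (Fin p) (Fin p) ℝ) (u : Fin p → ℝ) : ℝ :=
  u ⬝ᵥ R.mulVec u

lemma clm_eq_grad_dot {n : ℕ} (φ : (Fin n → ℝ) → ℝ) (y v : Fin n → ℝ)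
    (h : DifferentiableAt ℝ φ y) :
    fderiv ℝ φ y v = grad φ y ⬝ᵥ v := by
  have := (fderiv ℝ φ y).toLinearMap.pi_apply_eq_sum_univ v
  simp only [ContinuousLinearMap.coe_coe] at this
  rw [this]
  simp only [grad, dotProduct]
  refine Finset.sum_congr rfl fun i _ => ?_
  have h2 : (fun j => if i = j then (1:ℝ) else 0) = Pi.single i 1 := by
    ext j; simp [Pi.single_apply, eq_comm]
  rw [h2, smul_eq_mul, mul_comm]

theorem stmt_7 {n p : ℕ}
    (f : (Fin n → ℝ) → (Fin n → ℝ))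
    (g : (Fin n → ℝ) → Matrix (Fin n) (Fin p) ℝ)
    (hg : Continuous g)
    (R : Matrix (Fin p) (Fin p) ℝ)
    (hRsymm : R.IsSymm) (hRpd : R.PosDef)
    (m : (Fin n → ℝ) → ℝ) (hm : Continuous m)
    (φb : (Fin n → ℝ) → ℝ)
    (hφ : ContDiff ℝ 1 φb) (hφ0 : φb 0 = 0)
    (hHJB : ∀ x, grad φb x ⬝ᵥ f x
        - (1/4) * ((g x)ᵀ.mulVec (grad φb x) ⬝ᵥ R⁻¹.mulVec ((g x)ᵀ.mulVec (grad φb x)))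
        + m x = 0)
    (x : ℝ → (Fin n → ℝ)) (hxC1 : ContDiff ℝ 1 x)
    (hx : ∀ t, HasDerivAt x
      (f (x t) - (1/2 : ℝ) • (g (x t)).mulVec (R⁻¹.mulVec ((g (x t))ᵀ.mulVec (grad φb (x t))))) t)
    (u : ℝ → (Fin p → ℝ))
    (hu : ∀ t, u t = -(1/2 : ℝ) • R⁻¹.mulVec ((g (x t))ᵀ.mulVec (grad φb (x t))))
    (hx0 : Tendsto x atTop (nhds 0)) :
    (∀ T : ℝ, 0 ≤ T →
        (∫ t in (0:ℝ)..T, (sqR R (u t) + m (x t))) = φb (x 0) - φb (x T))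
    ∧ Tendsto (fun T : ℝ => ∫ t in (0:ℝ)..T, (sqR R (u t) + m (x t)))
        atTop (nhds (φb (x 0))) := by
  have hφd : Differentiable ℝ φb := hφ.differentiable one_ne_zero
  have hRdet : IsUnit R.det := isUnit_iff_ne_zero.mpr (ne_of_gt hRpd.det_pos)
  have hRinv : R * R⁻¹ = 1 := Matrix.mul_nonsing_inv R hRdet
  have hRinv_symm : R⁻¹ᵀ = R⁻¹ := by
    rw [Matrix.transpose_nonsing_inv, hRsymm.eq]
  -- key pointwise derivative identity
  have key : ∀ t, HasDerivAt (fun s => -φb (x s)) (sqR R (u t) + m (x t)) t := by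
    intro t
    set w : Fin p → ℝ := (g (x t))ᵀ.mulVec (grad φb (x t)) with hw
    set x' : Fin n → ℝ :=
      f (x t) - (1/2 : ℝ) • (g (x t)).mulVec (R⁻¹.mulVec w) with hx'
    have hcomp : HasDerivAt (fun s => φb (x s)) (fderiv ℝ φb (x t) x') t :=
      (hφd (x t)).hasFDerivAt.comp_hasDerivAt t (hx t)
    have hdot : fderiv ℝ φb (x t) x' = grad φb (x t) ⬝ᵥ x' :=
      clm_eq_grad_dot φb (x t) x' (hφd (x t))
    have e1 : grad φb (x t) ⬝ᵥ ((g (x t)).mulVec (R⁻¹.mulVec w)) = w ⬝ᵥ R⁻¹.mulVec w := by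
      rw [Matrix.dotProduct_mulVec, ← Matrix.mulVec_transpose, ← hw]
    have e2 : sqR R (u t) = (1/4 : ℝ) * (w ⬝ᵥ R⁻¹.mulVec w) := by
      have hv : R.mulVec (R⁻¹.mulVec w) = w := by
        rw [Matrix.mulVec_mulVec, hRinv, Matrix.one_mulVec]
      rw [sqR, hu t, ← hw, Matrix.mulVec_smul, hv, smul_dotProduct,
        dotProduct_smul, smul_eq_mul, smul_eq_mul,
        dotProduct_comm (R⁻¹.mulVec w) w]
      ring
    have hΦ := hHJB (x t)
    rw [← hw] at hΦ
    have e3 : grad φb (x t) ⬝ᵥ x' = -(sqR R (u t) + m (x t)) := by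
      rw [hx', dotProduct_sub, dotProduct_smul, e1, e2, smul_eq_mul]
      nlinarith [hΦ]
    have := hcomp.neg
    rw [hdot, e3, neg_neg] at this
    exact this
  -- continuity of the integrand
  have hgradc : Continuous (grad φb) := by
    have h1 : Continuous (fderiv ℝ φb) := hφ.continuous_fderiv one_ne_zero
    exact continuous_pi fun i =>
      (ContinuousLinearMap.apply ℝ ℝ (Pi.single i 1)).continuous.comp h1
  have hxc : Continuous x := hxC1.continuous
  have huc : Continuous u := by
    have : Continuous fun t => R⁻¹.mulVec ((g (x t))ᵀ.mulVec (grad φb (x t))) :=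
      Continuous.matrix_mulVec continuous_const
        (Continuous.matrix_mulVec ((hg.comp hxc).matrix_transpose) (hgradc.comp hxc))
    have h2 : Continuous fun t => (-(1/2 : ℝ)) • R⁻¹.mulVec ((g (x t))ᵀ.mulVec (grad φb (x t))) :=
      this.const_smul (-(1/2 : ℝ))
    exact h2.congr fun t => (hu t).symm
  have hic : Continuous fun t => sqR R (u t) + m (x t) := by
    have : Continuous fun t => sqR R (u t) :=
      Continuous.dotProduct huc (Continuous.matrix_mulVec continuous_const huc)
    exact this.add (hm.comp hxc)
  have hmain : ∀ T : ℝ,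
      (∫ t in (0:ℝ)..T, (sqR R (u t) + m (x t))) = φb (x 0) - φb (x T) := by
    intro T
    have := intervalIntegral.integral_eq_sub_of_hasDerivAt
      (f := fun s => -φb (x s)) (fun t _ => key t)
      (hic.intervalIntegrable 0 T)
    rw [this]; ring
  refine ⟨fun T _ => hmain T, ?_⟩
  have h1 : Tendsto (fun T => φb (x 0) - φb (x T)) atTop (nhds (φb (x 0))) := by
    have : Tendsto (fun T => φb (x T)) atTop (nhds (φb 0)) :=
      (hφ.continuous.tendsto 0).comp hx0
    rw [hφ0] at this
    simpa using (tendsto_const_nhds (x := φb (x 0))).sub this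
  exact Tendsto.congr (fun T => (hmain T).symm) h1
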